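/- arXiv:math/0301270 — 4 statements merged into one kernel-verified Lean document; each statement's English description precedes it below -/
import Mathlib

section
/- For every interval I ⊆ [0,1], the number of Farey fractions of order Q lying in I equals Q²|I|/(2ζ(2)) + O(Q log Q) as Q → ∞. -/
open scoped Classical

open Finset Real ArithmeticFunction

lemma countB (x y : ℝ) (hx : 0 ≤ x) (hxy : x ≤ y) (hy : y ≤ 1) (m : ℕ) (hm : 1 ≤ m) :
    |(((Finset.Icc 1 m).filter (fun b : ℕ => (b : ℝ) / m ∈ Set.Icc x y)).card : ℝ) - (y - x) * m| ≤ 2 := by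
  have hm0 : (0 : ℝ) < m := by exact_mod_cast hm
  have hxm : 0 ≤ x * m := mul_nonneg hx hm0.le
  have hym : 0 ≤ y * m := mul_nonneg (hx.trans hxy) hm0.le
  set A : ℕ := max 1 ⌈x * m⌉₊ with hA
  set B : ℕ := ⌊y * m⌋₊ with hB
  have hset : (Finset.Icc 1 m).filter (fun b : ℕ => (b : ℝ) / m ∈ Set.Icc x y) = Finset.Icc A B := by
    ext b
    simp only [Finset.mem_filter, Finset.mem_Icc, Set.mem_Icc, hA, hB, max_le_iff]
    constructor
    · rintro ⟨⟨h1, h2⟩, h3, h4⟩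
      refine ⟨⟨h1, Nat.ceil_le.2 ?_⟩, Nat.le_floor ?_⟩
      · rwa [← le_div_iff₀ hm0]
      · rwa [← div_le_iff₀ hm0]
    · rintro ⟨⟨h1, h2⟩, h3⟩
      have hbm : b ≤ m := by
        have : (b : ℝ) ≤ y * m := (Nat.le_floor_iff hym).1 h3
        have : (b : ℝ) ≤ m := this.trans (by nlinarith)
        exact_mod_cast this
      refine ⟨⟨h1, hbm⟩, ?_, ?_⟩
      · rw [le_div_iff₀ hm0]; exact (Nat.ceil_le.1 h2)
      · rw [div_le_iff₀ hm0]; exact (Nat.le_floor_iff hym).1 h3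
  rw [hset, Nat.card_Icc]
  have hAB : A ≤ B + 1 := by
    rcases le_or_gt ⌈x * m⌉₊ 1 with h | h
    · have : A = 1 := by omega
      omega
    · have hA' : A = ⌈x * m⌉₊ := by omega
      have h1 : ((A - 1 : ℕ) : ℝ) < x * m := by
        rw [hA']
        exact Nat.lt_ceil.1 (by omega)
      have h2 : (A - 1 : ℕ) ≤ B := Nat.le_floor (h1.le.trans (by nlinarith))
      omega
  have hcast : ((B + 1 - A : ℕ) : ℝ) = (B : ℝ) + 1 - A := by
    push_cast [Nat.cast_sub hAB]; ring
  rw [hcast]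
  have hB1 : (B : ℝ) ≤ y * m := Nat.floor_le hym
  have hB2 : y * m < (B : ℝ) + 1 := Nat.lt_floor_add_one _
  have hA1 : x * m ≤ (A : ℝ) := by
    calc x * m ≤ (⌈x * m⌉₊ : ℝ) := Nat.le_ceil _
    _ ≤ A := by exact_mod_cast Nat.le_max_right 1 _
  have hA2 : (A : ℝ) ≤ x * m + 1 := by
    have h1 : (⌈x * m⌉₊ : ℝ) < x * m + 1 := Nat.ceil_lt_add_one hxm
    have h2 : (1 : ℝ) ≤ x * m + 1 := by linarith
    have : (A : ℝ) = max (1 : ℝ) (⌈x * m⌉₊ : ℝ) := by push_cast [hA]; rfl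
    rw [this]
    exact max_le h2 h1.le
  rw [abs_le]
  constructor <;> nlinarith

noncomputable def fareyP (x y : ℝ) (M : ℕ) : Finset (ℕ × ℕ) :=
  (Finset.Icc 1 M ×ˢ Finset.Icc 1 M).filter
    (fun p => p.1 ≤ p.2 ∧ (p.1 : ℝ) / (p.2 : ℝ) ∈ Set.Icc x y)

lemma cardP_eq (x y : ℝ) (M : ℕ) :
    (fareyP x y M).card
      = ∑ m ∈ Finset.Icc 1 M, ((Finset.Icc 1 m).filter (fun b : ℕ => (b : ℝ) / m ∈ Set.Icc x y)).card := by
  rw [Finset.card_eq_sum_card_fiberwise (f := Prod.snd) (t := Finset.Icc 1 M)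
    (fun p hp => by
      simp only [Finset.mem_coe, fareyP, Finset.mem_filter, Finset.mem_product] at hp
      exact hp.1.2)]
  refine Finset.sum_congr rfl fun m hm => ?_
  simp only [Finset.mem_Icc] at hm
  refine Finset.card_bij (fun p _ => p.1) ?_ ?_ ?_
  · intro p hp
    simp only [fareyP, Finset.mem_filter, Finset.mem_product, Finset.mem_Icc] at hp ⊢
    obtain ⟨⟨⟨⟨h1, _⟩, _⟩, h3, h4⟩, h5⟩ := hp
    subst h5
    exact ⟨⟨h1, h3⟩, h4⟩
  · intro p hp q hq h
    simp only [Finset.mem_filter] at hp hq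
    exact Prod.ext h (hp.2.trans hq.2.symm)
  · intro b hb
    simp only [Finset.mem_filter, Finset.mem_Icc] at hb
    refine ⟨(b, m), ?_, rfl⟩
    simp only [fareyP, Finset.mem_filter, Finset.mem_product, Finset.mem_Icc]
    exact ⟨⟨⟨⟨hb.1.1, hb.1.2.trans hm.2⟩, hm⟩, hb.1.2, hb.2⟩, trivial⟩

lemma sum_Icc_id (M : ℕ) : ∑ m ∈ Finset.Icc 1 M, (m : ℝ) = M * (M + 1) / 2 := by
  induction M with
  | zero => simp
  | succ n ih =>
    rw [Finset.sum_Icc_succ_top (by omega)]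
    push_cast
    rw [ih]; ring

lemma cardP_est (x y : ℝ) (hx : 0 ≤ x) (hxy : x ≤ y) (hy : y ≤ 1) (M : ℕ) :
    |((fareyP x y M).card : ℝ) - (y - x) * M ^ 2 / 2| ≤ 3 * (M:ℝ) := by
  have hMnn : (0:ℝ) ≤ M := Nat.cast_nonneg M
  have h1 : ((fareyP x y M).card : ℝ)
      = ∑ m ∈ Finset.Icc 1 M, (((Finset.Icc 1 m).filter (fun b : ℕ => (b : ℝ) / m ∈ Set.Icc x y)).card : ℝ) := by
    rw [cardP_eq]; push_cast; rfl
  have h2 : |∑ m ∈ Finset.Icc 1 M,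
      ((((Finset.Icc 1 m).filter (fun b : ℕ => (b : ℝ) / m ∈ Set.Icc x y)).card : ℝ) - (y - x) * m)| ≤ 2 * M := by
    calc _ ≤ ∑ m ∈ Finset.Icc 1 M,
        |(((Finset.Icc 1 m).filter (fun b : ℕ => (b : ℝ) / m ∈ Set.Icc x y)).card : ℝ) - (y - x) * m| :=
        Finset.abs_sum_le_sum_abs _ _
      _ ≤ ∑ m ∈ Finset.Icc 1 M, (2:ℝ) := by
        refine Finset.sum_le_sum fun m hm => ?_
        exact countB x y hx hxy hy m (Finset.mem_Icc.1 hm).1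
      _ ≤ 2 * M := by
        rw [Finset.sum_const, Nat.card_Icc, Nat.add_sub_cancel, nsmul_eq_mul]
        linarith
  have h3 : ∑ m ∈ Finset.Icc 1 M,
      ((((Finset.Icc 1 m).filter (fun b : ℕ => (b : ℝ) / m ∈ Set.Icc x y)).card : ℝ) - (y - x) * m)
      = ((fareyP x y M).card : ℝ) - (y - x) * (M * (M + 1) / 2) := by
    rw [Finset.sum_sub_distrib, ← h1, ← Finset.mul_sum, sum_Icc_id]
  rw [h3] at h2
  have hyx1 : y - x ≤ 1 := by linarith
  have hyx0 : 0 ≤ y - x := by linarith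
  have : |(y - x) * (M * (M + 1) / 2) - (y - x) * M ^ 2 / 2| ≤ (M:ℝ) / 2 := by
    rw [abs_le]
    constructor <;> nlinarith
  calc |((fareyP x y M).card : ℝ) - (y - x) * M ^ 2 / 2|
      ≤ |((fareyP x y M).card : ℝ) - (y - x) * (M * (M + 1) / 2)|
        + |(y - x) * (M * (M + 1) / 2) - (y - x) * M ^ 2 / 2| := by
        exact abs_sub_le _ _ _
    _ ≤ 2 * M + M / 2 := add_le_add h2 this
    _ ≤ 3 * M := by linarith

lemma sum_divisors_moebius (n : ℕ) :
    ∑ d ∈ n.divisors, (moebius d : ℤ) = if n = 1 then 1 else 0 := by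
  have h : (moebius * (zeta : ArithmeticFunction ℕ) : ArithmeticFunction ℤ) n
      = (1 : ArithmeticFunction ℤ) n := by rw [moebius_mul_coe_zeta]
  rwa [coe_mul_zeta_apply, one_apply] at h

lemma mobius_id (x y : ℝ) (hx : 0 ≤ x) (Q : ℕ) :
    (((Finset.Icc 1 Q ×ˢ Finset.Icc 1 Q).filter
        (fun p => p.1 ≤ p.2 ∧ Nat.Coprime p.1 p.2 ∧
          (p.1 : ℝ) / (p.2 : ℝ) ∈ Set.Icc x y)).card : ℤ)
      = ∑ d ∈ Finset.Icc 1 Q, (moebius d : ℤ) * ((fareyP x y (Q / d)).card : ℤ) := by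
  have step1 : ∀ d : ℕ, (moebius d : ℤ) * ((fareyP x y (Q / d)).card : ℤ)
      = ∑ _p ∈ fareyP x y (Q / d), (moebius d : ℤ) := by
    intro d; rw [Finset.sum_const, nsmul_eq_mul, mul_comm]
  simp only [step1]
  rw [Finset.sum_sigma' (Finset.Icc 1 Q) (fun d => fareyP x y (Q / d))
    (fun d _ => (moebius d : ℤ))]
  rw [Finset.sum_nbij' (i := fun t : Σ _ : ℕ, ℕ × ℕ => (⟨(t.1 * t.2.1, t.1 * t.2.2), t.1⟩ : Σ _ : ℕ × ℕ, ℕ))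
    (j := fun t : Σ _ : ℕ × ℕ, ℕ => (⟨t.2, (t.1.1 / t.2, t.1.2 / t.2)⟩ : Σ _ : ℕ, ℕ × ℕ))
    (t := (fareyP x y Q).sigma (fun p => (Nat.gcd p.1 p.2).divisors))
    (g := fun t => (moebius t.2 : ℤ))
    ?_ ?_ ?_ ?_ ?_]
  · -- final computation
    rw [← Finset.sum_sigma' (fareyP x y Q) (fun p => (Nat.gcd p.1 p.2).divisors)
      (fun p d => (moebius d : ℤ))]
    have : ∀ p ∈ fareyP x y Q, ∑ d ∈ (Nat.gcd p.1 p.2).divisors, (moebius d : ℤ)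
        = if Nat.Coprime p.1 p.2 then 1 else 0 := by
      intro p _; rw [sum_divisors_moebius]
    rw [Finset.sum_congr rfl this, Finset.sum_boole]
    have hfe : ((Finset.Icc 1 Q ×ˢ Finset.Icc 1 Q).filter
        (fun p => p.1 ≤ p.2 ∧ Nat.Coprime p.1 p.2 ∧ (p.1 : ℝ) / (p.2 : ℝ) ∈ Set.Icc x y))
        = (fareyP x y Q).filter (fun p => Nat.Coprime p.1 p.2) := by
      rw [fareyP, Finset.filter_filter]
      apply Finset.filter_congr
      intro p _
      tauto
    rw [hfe]
  · -- hi : maps into target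
    rintro ⟨d, b, m⟩ ht
    simp only [Finset.mem_sigma, fareyP, Finset.mem_filter, Finset.mem_product,
      Finset.mem_Icc, Nat.mem_divisors] at ht ⊢
    obtain ⟨⟨hd1, hdQ⟩, ⟨⟨hb1, hb2⟩, hm1, hm2⟩, hbm, hfr⟩ := ht
    have hd0 : 0 < d := hd1
    have hmQ : d * m ≤ Q := by
      rw [mul_comm]; exact (Nat.le_div_iff_mul_le hd0).1 hm2
    have hbQ : d * b ≤ Q := le_trans (Nat.mul_le_mul_left d hbm) hmQ
    have hdb1 : 1 ≤ d * b := Nat.one_le_iff_ne_zero.2 (by positivity)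
    have hdm1 : 1 ≤ d * m := Nat.one_le_iff_ne_zero.2 (by positivity)
    have hfrac : ((d * b : ℕ) : ℝ) / ((d * m : ℕ) : ℝ) = (b : ℝ) / m := by
      push_cast
      rw [mul_div_mul_left]
      exact_mod_cast hd0.ne'
    refine ⟨⟨⟨⟨hdb1, hbQ⟩, hdm1, hmQ⟩, Nat.mul_le_mul_left d hbm, by rwa [hfrac]⟩,
      Nat.dvd_gcd ⟨b, rfl⟩ ⟨m, rfl⟩, ?_⟩
    exact fun h => (Nat.one_le_iff_ne_zero.1 hdb1) ((Nat.gcd_eq_zero_iff.1 h).1)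
  · -- hj
    rintro ⟨⟨a, q⟩, d⟩ ht
    simp only [Finset.mem_sigma, fareyP, Finset.mem_filter, Finset.mem_product,
      Finset.mem_Icc, Nat.mem_divisors] at ht ⊢
    obtain ⟨⟨⟨⟨ha1, haQ⟩, hq1, hqQ⟩, haq, hfr⟩, hdvd, hg0⟩ := ht
    have hda : d ∣ a := hdvd.trans (Nat.gcd_dvd_left _ _)
    have hdq : d ∣ q := hdvd.trans (Nat.gcd_dvd_right _ _)
    have hd0 : 0 < d := Nat.pos_of_ne_zero (by rintro rfl; simp at hdvd; omega)
    obtain ⟨b, rfl⟩ := hda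
    obtain ⟨m, rfl⟩ := hdq
    rw [Nat.mul_div_cancel_left _ hd0, Nat.mul_div_cancel_left _ hd0]
    have hb1 : 1 ≤ b := Nat.pos_of_ne_zero fun h => by subst h; simp at ha1
    have hm1 : 1 ≤ m := Nat.pos_of_ne_zero fun h => by subst h; simp at hq1
    have hbm : b ≤ m := Nat.le_of_mul_le_mul_left haq hd0
    have hfrac : ((d * b : ℕ) : ℝ) / ((d * m : ℕ) : ℝ) = (b : ℝ) / m := by
      push_cast
      rw [mul_div_mul_left]
      exact_mod_cast hd0.ne'
    refine ⟨⟨hd0, ?_⟩, ⟨⟨hb1, ?_⟩, hm1, ?_⟩, hbm, by rwa [hfrac] at hfr⟩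
    · calc d ≤ d * b := Nat.le_mul_of_pos_right d hb1
        _ ≤ Q := haQ
    · exact (Nat.le_div_iff_mul_le hd0).2 (by rw [mul_comm]; exact haQ)
    · exact (Nat.le_div_iff_mul_le hd0).2 (by rw [mul_comm]; exact hqQ)
  · -- left_inv
    rintro ⟨d, b, m⟩ ht
    simp only [Finset.mem_sigma, fareyP, Finset.mem_filter, Finset.mem_product,
      Finset.mem_Icc] at ht
    have hd0 : 0 < d := ht.1.1
    simp [Nat.mul_div_cancel_left _ hd0]
  · -- right_inv
    rintro ⟨⟨a, q⟩, d⟩ ht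
    simp only [Finset.mem_sigma, fareyP, Finset.mem_filter, Finset.mem_product,
      Finset.mem_Icc, Nat.mem_divisors] at ht
    obtain ⟨_, hdvd, hg0⟩ := ht
    have hda : d ∣ a := hdvd.trans (Nat.gcd_dvd_left _ _)
    have hdq : d ∣ q := hdvd.trans (Nat.gcd_dvd_right _ _)
    simp [Nat.mul_div_cancel' hda, Nat.mul_div_cancel' hdq]
  · -- h : values agree
    rintro ⟨d, b, m⟩ _
    rfl

lemma mu_term_bound (n : ℕ) : |(moebius n : ℝ) / (n : ℝ) ^ 2| ≤ ((n : ℝ) ^ 2)⁻¹ := by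
  rcases Nat.eq_zero_or_pos n with rfl | hn
  · simp
  · have h2 : (0:ℝ) < (n : ℝ) ^ 2 := by positivity
    rw [abs_div, abs_of_pos h2, div_le_iff₀ h2, inv_mul_cancel₀ h2.ne']
    exact_mod_cast (abs_moebius_le_one (n := n))

lemma mu_summable_norm : Summable (fun n : ℕ => |(moebius n : ℝ) / (n : ℝ) ^ 2|) := by
  apply Summable.of_nonneg_of_le (fun n => abs_nonneg _) mu_term_bound
  simpa [one_div] using hasSum_zeta_two.summable

lemma mu_tsum : HasSum (fun n : ℕ => (moebius n : ℝ) / (n : ℝ) ^ 2) (6 / π ^ 2) := by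
  have hsum : Summable (fun n : ℕ => (moebius n : ℝ) / (n : ℝ) ^ 2) :=
    mu_summable_norm.of_abs
  set S : ℝ := ∑' n : ℕ, (moebius n : ℝ) / (n : ℝ) ^ 2 with hS
  have hHS : HasSum (fun n : ℕ => (moebius n : ℝ) / (n : ℝ) ^ 2) S := hsum.hasSum
  suffices hSval : S = 6 / π ^ 2 by rwa [hSval] at hHS
  -- complex side
  have h2re : (1 : ℝ) < (2 : ℂ).re := by norm_num
  have hterm : ∀ n : ℕ, LSeries.term (fun n => (moebius n : ℂ)) 2 n
      = (((moebius n : ℝ) / (n : ℝ) ^ 2 : ℝ) : ℂ) := by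
    intro n
    rcases Nat.eq_zero_or_pos n with rfl | hn
    · simp [LSeries.term]
    · rw [LSeries.term_of_ne_zero (Nat.one_le_iff_ne_zero.1 hn)]
      have : (n : ℂ) ^ (2 : ℂ) = ((n : ℝ) ^ 2 : ℝ) := by
        rw [show (2 : ℂ) = ((2 : ℕ) : ℂ) by norm_num, Complex.cpow_natCast]
        push_cast
        ring
      rw [this]
      push_cast
      ring
  have hLS : LSeries (fun n => (moebius n : ℂ)) 2 = (S : ℂ) := by
    rw [LSeries]
    rw [tsum_congr hterm]
    exact (Complex.hasSum_ofReal.2 hHS).tsum_eq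
  have hzeta : riemannZeta 2 ≠ 0 := riemannZeta_ne_zero_of_one_lt_re h2re
  have hmul := LSeries_zeta_mul_Lseries_moebius h2re
  rw [LSeries_zeta_eq_riemannZeta h2re] at hmul
  have : LSeries (fun n => (moebius n : ℂ)) 2 = (riemannZeta 2)⁻¹ := by
    field_simp at hmul ⊢
    linear_combination hmul
  rw [hLS, riemannZeta_two] at this
  have hpi : (π : ℂ) ^ 2 / 6 ≠ 0 := by
    simp only [ne_eq, div_eq_zero_iff]
    push_neg
    exact ⟨pow_ne_zero 2 (by exact_mod_cast Real.pi_ne_zero), by norm_num⟩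
  have : (S : ℂ) = ((6 / π ^ 2 : ℝ) : ℂ) := by
    rw [this]
    push_cast
    rw [inv_div]
  exact_mod_cast this

set_option maxHeartbeats 1000000 in
lemma abstract_partial_est (f : ℕ → ℝ) (S : ℝ) (hb : ∀ n, |f n| ≤ ((n : ℝ) ^ 2)⁻¹)
    (hs : HasSum f S) (hn : Summable (fun n => |f n|)) (f0 : f 0 = 0)
    (Q : ℕ) (hQ : 1 ≤ Q) :
    |∑ d ∈ Finset.Icc 1 Q, f d - S| ≤ 1 / (Q:ℝ) := by
  have hrange : ∑ d ∈ Finset.range (Q + 1), f d = ∑ d ∈ Finset.Icc 1 Q, f d := by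
    have h0 : Finset.range (Q + 1) = insert 0 (Finset.Icc 1 Q) := by
      ext n
      simp only [Finset.mem_range, Finset.mem_insert, Finset.mem_Icc]
      omega
    rw [h0, Finset.sum_insert (by simp), f0, zero_add]
  have htail := Summable.sum_add_tsum_nat_add (f := f) (Q + 1) hs.summable
  rw [hs.tsum_eq, hrange] at htail
  have heq : ∑ d ∈ Finset.Icc 1 Q, f d - S = -∑' i : ℕ, f (i + (Q + 1)) := by
    linarith [htail]
  rw [heq, abs_neg]
  have hshift : Summable (fun i : ℕ => |f (i + (Q + 1))|) :=
    hn.comp_injective (add_left_injective (Q + 1))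
  calc |∑' i : ℕ, f (i + (Q + 1))| ≤ ∑' i : ℕ, |f (i + (Q + 1))| := by
        simpa [Real.norm_eq_abs] using
          norm_tsum_le_tsum_norm (f := fun i : ℕ => f (i + (Q + 1)))
            (by simpa [Real.norm_eq_abs] using hshift)
    _ ≤ 1 / (Q:ℝ) := by
        apply Real.tsum_le_of_sum_range_le (fun i => abs_nonneg _)
        intro n
        have hQ0 : Q ≠ 0 := by omega
        calc ∑ i ∈ Finset.range n, |f (i + (Q + 1))|
            ≤ ∑ i ∈ Finset.range n, (((i + (Q + 1) : ℕ) : ℝ) ^ 2)⁻¹ :=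
              Finset.sum_le_sum fun i _ => hb _
          _ = ∑ d ∈ Finset.Ioc Q (Q + n), (((d : ℕ) : ℝ) ^ 2)⁻¹ := by
              rw [show Finset.Ioc Q (Q + n) = Finset.Ico (Q + 1) (Q + n + 1) by
                rw [← Finset.Ico_add_one_add_one_eq_Ioc]]
              rw [Finset.sum_Ico_eq_sum_range]
              have hlen : Q + n + 1 - (Q + 1) = n := by omega
              rw [hlen]
              exact Finset.sum_congr rfl fun i _ => by rw [show Q + 1 + i = i + (Q + 1) by omega]
          _ ≤ (Q : ℝ)⁻¹ - ((Q + n : ℕ) : ℝ)⁻¹ := sum_Ioc_inv_sq_le_sub hQ0 (by omega)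
          _ ≤ 1 / (Q:ℝ) := by
              rw [one_div]
              have : (0:ℝ) ≤ ((Q + n : ℕ) : ℝ)⁻¹ := by positivity
              linarith

lemma mu_partial_est (Q : ℕ) (hQ : 1 ≤ Q) :
    |∑ d ∈ Finset.Icc 1 Q, (moebius d : ℝ) / (d : ℝ) ^ 2 - 6 / π ^ 2| ≤ 1 / (Q:ℝ) :=
  abstract_partial_est _ _ mu_term_bound mu_tsum mu_summable_norm (by simp) Q hQ

lemma harm_bound (Q : ℕ) : ∑ d ∈ Finset.Icc 1 Q, ((d:ℝ))⁻¹ ≤ 1 + Real.log Q := by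
  have h := harmonic_le_one_add_log Q
  rw [harmonic_eq_sum_Icc] at h
  calc ∑ d ∈ Finset.Icc 1 Q, ((d:ℝ))⁻¹ = ((∑ i ∈ Finset.Icc 1 Q, (i:ℚ)⁻¹ : ℚ) : ℝ) := by
        push_cast; rfl
    _ ≤ 1 + Real.log Q := h

set_option maxHeartbeats 2000000 in
/-- For every interval `I = [x,y] ⊆ [0,1]`, the number of Farey fractions of order `Q`
lying in `I` equals `Q²|I|/(2ζ(2)) + O(Q log Q)` as `Q → ∞`. -/
theorem farey_count_asymptotic :
    ∃ C > 0, ∀ x y : ℝ, 0 ≤ x → x ≤ y → y ≤ 1 → ∀ Q : ℕ, 2 ≤ Q →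
      |(((Finset.Icc 1 Q ×ˢ Finset.Icc 1 Q).filter
            (fun p => p.1 ≤ p.2 ∧ Nat.Coprime p.1 p.2 ∧
              (p.1 : ℝ) / (p.2 : ℝ) ∈ Set.Icc x y)).card : ℝ)
        - (Q : ℝ) ^ 2 * (y - x) / (2 * (Real.pi ^ 2 / 6))|
      ≤ C * Q * Real.log Q := by
  refine ⟨20, by norm_num, fun x y hx hxy hy Q hQ => ?_⟩
  have hQ1 : 1 ≤ Q := by omega
  have hQR : (2:ℝ) ≤ (Q:ℝ) := by exact_mod_cast hQ
  have hQpos : (0:ℝ) < Q := by linarith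
  set L := Real.log Q with hLdef
  have hL : (2/3 : ℝ) < L := by
    have h2 : (2/3 : ℝ) < Real.log 2 := by
      have := Real.log_two_gt_d9
      linarith
    have : Real.log 2 ≤ L := Real.log_le_log (by norm_num) hQR
    linarith
  have hLpos : 0 < L := by linarith
  -- cast the Möbius identity to ℝ
  have hid : (((Finset.Icc 1 Q ×ˢ Finset.Icc 1 Q).filter
        (fun p => p.1 ≤ p.2 ∧ Nat.Coprime p.1 p.2 ∧
          (p.1 : ℝ) / (p.2 : ℝ) ∈ Set.Icc x y)).card : ℝ)
      = ∑ d ∈ Finset.Icc 1 Q, (moebius d : ℝ) * ((fareyP x y (Q / d)).card : ℝ) := by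
    have := mobius_id x y hx Q
    have h2 := congrArg (fun z : ℤ => (z : ℝ)) this
    push_cast at h2
    exact h2
  rw [hid]
  have hyx0 : 0 ≤ y - x := by linarith
  have hyx1 : y - x ≤ 1 := by linarith
  -- abbreviations
  set G : ℝ := ∑ d ∈ Finset.Icc 1 Q, (moebius d : ℝ) * ((fareyP x y (Q / d)).card : ℝ) with hG
  set A : ℝ := ∑ d ∈ Finset.Icc 1 Q,
    (moebius d : ℝ) * (((fareyP x y (Q / d)).card : ℝ) - (y - x) * ((Q / d : ℕ) : ℝ) ^ 2 / 2) with hA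
  set B : ℝ := (y - x) / 2 * ∑ d ∈ Finset.Icc 1 Q,
    (moebius d : ℝ) * (((Q / d : ℕ) : ℝ) ^ 2 - ((Q : ℝ) / (d : ℝ)) ^ 2) with hB
  set Cc : ℝ := (y - x) / 2 * (Q:ℝ) ^ 2 *
    ((∑ d ∈ Finset.Icc 1 Q, (moebius d : ℝ) / (d : ℝ) ^ 2) - 6 / π ^ 2) with hC
  have hpi : (π : ℝ) ≠ 0 := Real.pi_ne_zero
  have hsplit : G - (Q : ℝ) ^ 2 * (y - x) / (2 * (π ^ 2 / 6)) = A + B + Cc := by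
    have hG2 : G = A + (y - x) / 2 * (∑ d ∈ Finset.Icc 1 Q,
          (moebius d : ℝ) * (((Q / d : ℕ) : ℝ) ^ 2 - ((Q : ℝ) / (d : ℝ)) ^ 2))
        + (y - x) / 2 * (Q:ℝ) ^ 2 * (∑ d ∈ Finset.Icc 1 Q, (moebius d : ℝ) / (d : ℝ) ^ 2) := by
      rw [hG, hA, Finset.mul_sum, Finset.mul_sum, ← Finset.sum_add_distrib,
        ← Finset.sum_add_distrib]
      exact Finset.sum_congr rfl fun d _ => by ring
    rw [hG2, hB, hC]
    field_simp
    ring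
  -- bounds
  have hinv_sum : ∑ d ∈ Finset.Icc 1 Q, ((d:ℝ))⁻¹ ≤ 1 + L := harm_bound Q
  have hinv_nonneg : (0:ℝ) ≤ ∑ d ∈ Finset.Icc 1 Q, ((d:ℝ))⁻¹ :=
    Finset.sum_nonneg fun d _ => by positivity
  have hmu_le : ∀ d : ℕ, |(moebius d : ℝ)| ≤ 1 := by
    intro d
    exact_mod_cast (abs_moebius_le_one (n := d))
  have hMd : ∀ d ∈ Finset.Icc 1 Q, ((Q / d : ℕ) : ℝ) ≤ (Q:ℝ) * ((d:ℝ))⁻¹ ∧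
      (Q:ℝ) * ((d:ℝ))⁻¹ < ((Q / d : ℕ) : ℝ) + 1 := by
    intro d hd
    have hd1 : 1 ≤ d := (Finset.mem_Icc.1 hd).1
    have hd0 : (0:ℝ) < d := by exact_mod_cast hd1
    constructor
    · rw [← div_eq_mul_inv]
      exact Nat.cast_div_le
    · rw [← div_eq_mul_inv, div_lt_iff₀ hd0]
      have := Nat.lt_div_mul_add (a := Q) (b := d) hd1
      have h2 : (Q:ℝ) < ((Q / d * d + d : ℕ) : ℝ) := by exact_mod_cast this
      push_cast at h2
      linarith
  have hA_bound : |A| ≤ 3 * (Q:ℝ) * (1 + L) := by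
    rw [hA]
    calc |∑ d ∈ Finset.Icc 1 Q, (moebius d : ℝ) *
          (((fareyP x y (Q / d)).card : ℝ) - (y - x) * ((Q / d : ℕ) : ℝ) ^ 2 / 2)|
        ≤ ∑ d ∈ Finset.Icc 1 Q, |(moebius d : ℝ) *
          (((fareyP x y (Q / d)).card : ℝ) - (y - x) * ((Q / d : ℕ) : ℝ) ^ 2 / 2)| :=
          Finset.abs_sum_le_sum_abs _ _
      _ ≤ ∑ d ∈ Finset.Icc 1 Q, 3 * (Q:ℝ) * ((d:ℝ))⁻¹ := by
          refine Finset.sum_le_sum fun d hd => ?_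
          rw [abs_mul]
          have h1 : |((fareyP x y (Q / d)).card : ℝ) - (y - x) * ((Q / d : ℕ) : ℝ) ^ 2 / 2|
              ≤ 3 * ((Q / d : ℕ) : ℝ) := by
            have := cardP_est x y hx hxy hy (Q / d)
            calc |((fareyP x y (Q / d)).card : ℝ) - (y - x) * ((Q / d : ℕ) : ℝ) ^ 2 / 2|
                = |((fareyP x y (Q / d)).card : ℝ) - (y - x) * ((Q / d : ℕ) : ℝ) ^ 2 / 2| := rfl
              _ ≤ 3 * ((Q / d : ℕ) : ℝ) := by
                  have h2 : (y - x) * ((Q / d : ℕ) : ℝ) ^ 2 / 2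
                      = (y - x) * (((Q / d : ℕ) : ℝ)) ^ 2 / 2 := rfl
                  exact this
          have h2 : 3 * ((Q / d : ℕ) : ℝ) ≤ 3 * ((Q:ℝ) * ((d:ℝ))⁻¹) := by
            have := (hMd d hd).1
            linarith
          calc |(moebius d : ℝ)| * |((fareyP x y (Q / d)).card : ℝ)
                - (y - x) * ((Q / d : ℕ) : ℝ) ^ 2 / 2|
              ≤ 1 * (3 * ((Q:ℝ) * ((d:ℝ))⁻¹)) := by
                apply mul_le_mul (hmu_le d) (h1.trans h2) (abs_nonneg _) zero_le_one
            _ = 3 * (Q:ℝ) * ((d:ℝ))⁻¹ := by ring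
      _ = 3 * (Q:ℝ) * ∑ d ∈ Finset.Icc 1 Q, ((d:ℝ))⁻¹ := by rw [Finset.mul_sum]
      _ ≤ 3 * (Q:ℝ) * (1 + L) := by
          apply mul_le_mul_of_nonneg_left hinv_sum (by positivity)
  have hB_bound : |B| ≤ (Q:ℝ) * (1 + L) := by
    rw [hB, abs_mul]
    have hc2 : |(y - x) / 2| ≤ 1 / 2 := by rw [abs_of_nonneg (by linarith)]; linarith
    have hS : |∑ d ∈ Finset.Icc 1 Q, (moebius d : ℝ) *
        (((Q / d : ℕ) : ℝ) ^ 2 - ((Q : ℝ) / (d : ℝ)) ^ 2)|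
        ≤ ∑ d ∈ Finset.Icc 1 Q, 2 * (Q:ℝ) * ((d:ℝ))⁻¹ := by
      refine (Finset.abs_sum_le_sum_abs _ _).trans (Finset.sum_le_sum fun d hd => ?_)
      rw [abs_mul]
      have hd1 : 1 ≤ d := (Finset.mem_Icc.1 hd).1
      have hd0 : (0:ℝ) < d := by exact_mod_cast hd1
      have hQd : (Q:ℝ) / (d:ℝ) = (Q:ℝ) * ((d:ℝ))⁻¹ := div_eq_mul_inv _ _
      have h1 := (hMd d hd).1
      have h2 := (hMd d hd).2
      have hMd0 : (0:ℝ) ≤ ((Q / d : ℕ) : ℝ) := Nat.cast_nonneg _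
      have habs : |((Q / d : ℕ) : ℝ) ^ 2 - ((Q : ℝ) / (d : ℝ)) ^ 2|
          ≤ 2 * ((Q:ℝ) * ((d:ℝ))⁻¹) := by
        rw [hQd, abs_le]
        constructor <;> nlinarith
      calc |(moebius d : ℝ)| * |((Q / d : ℕ) : ℝ) ^ 2 - ((Q : ℝ) / (d : ℝ)) ^ 2|
          ≤ 1 * (2 * ((Q:ℝ) * ((d:ℝ))⁻¹)) :=
            mul_le_mul (hmu_le d) habs (abs_nonneg _) zero_le_one
        _ = 2 * (Q:ℝ) * ((d:ℝ))⁻¹ := by ring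
    calc |(y - x) / 2| * |∑ d ∈ Finset.Icc 1 Q, (moebius d : ℝ) *
          (((Q / d : ℕ) : ℝ) ^ 2 - ((Q : ℝ) / (d : ℝ)) ^ 2)|
        ≤ (1/2) * (∑ d ∈ Finset.Icc 1 Q, 2 * (Q:ℝ) * ((d:ℝ))⁻¹) := by
          apply mul_le_mul hc2 hS (abs_nonneg _) (by norm_num)
      _ = (Q:ℝ) * ∑ d ∈ Finset.Icc 1 Q, ((d:ℝ))⁻¹ := by
          rw [Finset.mul_sum, Finset.mul_sum]
          exact Finset.sum_congr rfl fun d _ => by ring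
      _ ≤ (Q:ℝ) * (1 + L) := mul_le_mul_of_nonneg_left hinv_sum (by positivity)
  have hC_bound : |Cc| ≤ (Q:ℝ) / 2 := by
    rw [hC, abs_mul, abs_mul]
    have h1 : |(y - x) / 2| ≤ 1 / 2 := by rw [abs_of_nonneg (by linarith)]; linarith
    have h2 : |(Q:ℝ) ^ 2| = (Q:ℝ) ^ 2 := abs_of_nonneg (by positivity)
    have h3 := mu_partial_est Q hQ1
    calc |(y - x) / 2| * |(Q:ℝ) ^ 2| *
          |∑ d ∈ Finset.Icc 1 Q, (moebius d : ℝ) / (d : ℝ) ^ 2 - 6 / π ^ 2|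
        ≤ (1 / 2) * (Q:ℝ) ^ 2 * (1 / (Q:ℝ)) := by
          rw [h2]
          apply mul_le_mul (mul_le_mul h1 le_rfl (by positivity) (by norm_num)) h3
            (abs_nonneg _) (by positivity)
      _ = (Q:ℝ) / 2 := by field_simp
  rw [hsplit]
  calc |A + B + Cc| ≤ |A| + |B| + |Cc| := abs_add_three _ _ _
    _ ≤ 3 * (Q:ℝ) * (1 + L) + (Q:ℝ) * (1 + L) + (Q:ℝ) / 2 := by
        linarith
    _ ≤ 20 * (Q:ℝ) * L := by nlinarith [mul_le_mul_of_nonneg_left hL.le hQpos.le]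
end

section
/- The sum over all pairs of consecutive Farey fractions of order Q, with denominators q and q', of 1/(q'²(q+q')²) is O(1/Q) as Q → ∞. -/
/-- `a/q < a'/q'` are consecutive Farey fractions of order `Q`. -/
def FareyConsec (Q a q a' q' : ℕ) : Prop :=
  1 ≤ a ∧ a ≤ q ∧ q ≤ Q ∧ 1 ≤ a' ∧ a' ≤ q' ∧ q' ≤ Q ∧
    Nat.Coprime a q ∧ Nat.Coprime a' q' ∧ (a : ℚ) / q < (a' : ℚ) / q' ∧
    ∀ b r : ℕ, 1 ≤ r → r ≤ Q →
      (a : ℚ) / q < (b : ℚ) / r → (b : ℚ) / r < (a' : ℚ) / q' → False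

open scoped Classical

lemma farey_mediant {Q a q a' q' : ℕ} (h : FareyConsec Q a q a' q') : Q < q + q' := by
  obtain ⟨ha, haq, hqQ, ha', ha'q', hq'Q, hc, hc', hlt, hcons⟩ := h
  by_contra hQ
  push_neg at hQ
  have hq : (1:ℕ) ≤ q := le_trans ha haq
  have hq' : (1:ℕ) ≤ q' := le_trans ha' ha'q'
  have hqpos : (0:ℚ) < q := by exact_mod_cast hq
  have hq'pos : (0:ℚ) < q' := by exact_mod_cast hq'
  have hrpos : (0:ℚ) < (q:ℚ) + q' := by positivity
  have hmul : (a:ℚ) * q' < (a':ℚ) * q := by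
    rwa [div_lt_div_iff₀ hqpos hq'pos] at hlt
  refine hcons (a + a') (q + q') (le_trans hq (Nat.le_add_right _ _)) hQ ?_ ?_
  · push_cast
    rw [div_lt_div_iff₀ hqpos hrpos]
    nlinarith
  · push_cast
    rw [div_lt_div_iff₀ hrpos hq'pos]
    nlinarith

lemma farey_pred_unique {Q a1 q1 a2 q2 a' q' : ℕ}
    (h1 : FareyConsec Q a1 q1 a' q') (h2 : FareyConsec Q a2 q2 a' q') :
    a1 = a2 ∧ q1 = q2 := by
  obtain ⟨ha1, haq1, hq1Q, _, _, _, hc1, _, hlt1, hcons1⟩ := h1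
  obtain ⟨ha2, haq2, hq2Q, _, _, _, hc2, _, hlt2, hcons2⟩ := h2
  have hq1 : (1:ℕ) ≤ q1 := le_trans ha1 haq1
  have hq2 : (1:ℕ) ≤ q2 := le_trans ha2 haq2
  have heq : (a1:ℚ) / q1 = (a2:ℚ) / q2 := by
    rcases lt_trichotomy ((a1:ℚ)/q1) ((a2:ℚ)/q2) with h | h | h
    · exact absurd (hcons1 a2 q2 hq2 hq2Q h hlt2) not_false
    · exact h
    · exact absurd (hcons2 a1 q1 hq1 hq1Q h hlt1) not_false
  have hq1pos : (0:ℚ) < q1 := by exact_mod_cast hq1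
  have hq2pos : (0:ℚ) < q2 := by exact_mod_cast hq2
  rw [div_eq_div_iff (ne_of_gt hq1pos) (ne_of_gt hq2pos)] at heq
  have hnat : a1 * q2 = a2 * q1 := by exact_mod_cast heq
  have hd1 : a1 ∣ a2 := hc1.dvd_of_dvd_mul_right ⟨q2, hnat.symm⟩
  have hd2 : a2 ∣ a1 := hc2.dvd_of_dvd_mul_right ⟨q1, hnat⟩
  have ha : a1 = a2 := Nat.dvd_antisymm hd1 hd2
  subst ha
  refine ⟨rfl, ?_⟩
  have := Nat.eq_of_mul_eq_mul_left (lt_of_lt_of_le Nat.zero_lt_one ha1) hnat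
  omega

lemma sum_inv_sq_le (n : ℕ) : ∑ q ∈ Finset.Icc 1 n, (1:ℝ) / (q:ℝ)^2 ≤ 2 := by
  have key : ∀ m : ℕ, 1 ≤ m → ∑ q ∈ Finset.Icc 1 m, (1:ℝ) / (q:ℝ)^2 ≤ 2 - 1/(m:ℝ) := by
    intro m hm
    induction m with
    | zero => omega
    | succ k ih =>
      rcases Nat.eq_or_lt_of_le hm with h1 | h1
      · simp [← h1]
        norm_num
      · have hk : 1 ≤ k := by omega
        have hsum := ih hk
        rw [Finset.sum_Icc_succ_top (by omega : 1 ≤ k + 1)]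
        have hkpos : (0:ℝ) < k := by exact_mod_cast hk
        have : (1:ℝ) / ((k:ℝ)+1)^2 ≤ 1/(k:ℝ) - 1/((k:ℝ)+1) := by
          rw [div_sub_div _ _ (ne_of_gt hkpos) (by positivity)]
          rw [div_le_div_iff₀ (by positivity) (by positivity)]
          ring_nf
          nlinarith
        push_cast
        linarith
  rcases Nat.eq_zero_or_pos n with h | h
  · simp [h]
  · have := key n h
    have : (0:ℝ) < n := by exact_mod_cast h
    have hn := key n h
    have : (0:ℝ) ≤ 1/(n:ℝ) := by positivity
    linarith

/-- The sum over all pairs of consecutive Farey fractions of order `Q`, with denominators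
`q` and `q'`, of `1/(q'²(q+q')²)` is `O(1/Q)` as `Q → ∞`. -/
theorem sum_farey_consec_inv_q'_sq_sum_sq :
    ∃ C > 0, ∀ Q : ℕ, 1 ≤ Q →
      ∑ p ∈ ((Finset.Icc 1 Q ×ˢ Finset.Icc 1 Q) ×ˢ (Finset.Icc 1 Q ×ˢ Finset.Icc 1 Q)).filter
          (fun p => FareyConsec Q p.1.1 p.1.2 p.2.1 p.2.2),
        (1 : ℝ) / ((p.2.2 : ℝ) ^ 2 * ((p.1.2 : ℝ) + (p.2.2 : ℝ)) ^ 2) ≤ C / Q := by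
  refine ⟨2, by norm_num, fun Q hQ => ?_⟩
  set S := ((Finset.Icc 1 Q ×ˢ Finset.Icc 1 Q) ×ˢ (Finset.Icc 1 Q ×ˢ Finset.Icc 1 Q)).filter
      (fun p => FareyConsec Q p.1.1 p.1.2 p.2.1 p.2.2) with hS
  have hQpos : (0:ℝ) < Q := by exact_mod_cast hQ
  have step1 : ∑ p ∈ S, (1 : ℝ) / ((p.2.2 : ℝ) ^ 2 * ((p.1.2 : ℝ) + (p.2.2 : ℝ)) ^ 2)
      ≤ ∑ p ∈ S, (1 : ℝ) / ((p.2.2 : ℝ) ^ 2 * (Q:ℝ) ^ 2) := by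
    refine Finset.sum_le_sum fun p hp => ?_
    have hf : FareyConsec Q p.1.1 p.1.2 p.2.1 p.2.2 := (Finset.mem_filter.mp hp).2
    have hm := farey_mediant hf
    have hq' : 1 ≤ p.2.2 := le_trans hf.2.2.2.1 hf.2.2.2.2.1
    have hq'pos : (0:ℝ) < (p.2.2:ℝ) := by exact_mod_cast hq'
    have hQle : (Q:ℝ) ≤ (p.1.2:ℝ) + (p.2.2:ℝ) := by exact_mod_cast le_of_lt hm
    gcongr
  have hinj : ∀ x ∈ S, ∀ y ∈ S, x.2 = y.2 → x = y := by
    intro x hx y hy hxy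
    have hfx : FareyConsec Q x.1.1 x.1.2 x.2.1 x.2.2 := (Finset.mem_filter.mp hx).2
    have hfy : FareyConsec Q y.1.1 y.1.2 y.2.1 y.2.2 := (Finset.mem_filter.mp hy).2
    rw [hxy] at hfx
    obtain ⟨ha, hq⟩ := farey_pred_unique hfx hfy
    have : x.1 = y.1 := Prod.ext ha hq
    exact Prod.ext this hxy
  have step2 : ∑ p ∈ S, (1 : ℝ) / ((p.2.2 : ℝ) ^ 2 * (Q:ℝ) ^ 2)
      = ∑ y ∈ S.image Prod.snd, (1 : ℝ) / ((y.2 : ℝ) ^ 2 * (Q:ℝ) ^ 2) :=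
    (Finset.sum_image (f := fun y : ℕ × ℕ => (1 : ℝ) / ((y.2 : ℝ) ^ 2 * (Q:ℝ) ^ 2)) hinj).symm
  have hsub : S.image Prod.snd ⊆ Finset.Icc 1 Q ×ˢ Finset.Icc 1 Q := by
    intro y hy
    obtain ⟨p, hp, rfl⟩ := Finset.mem_image.mp hy
    exact (Finset.mem_product.mp (Finset.mem_filter.mp hp).1).2
  have step3 : ∑ y ∈ S.image Prod.snd, (1 : ℝ) / ((y.2 : ℝ) ^ 2 * (Q:ℝ) ^ 2)
      ≤ ∑ y ∈ Finset.Icc 1 Q ×ˢ Finset.Icc 1 Q, (1 : ℝ) / ((y.2 : ℝ) ^ 2 * (Q:ℝ) ^ 2) := by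
    refine Finset.sum_le_sum_of_subset_of_nonneg hsub fun y _ _ => by positivity
  have step4 : ∑ y ∈ Finset.Icc 1 Q ×ˢ Finset.Icc 1 Q, (1 : ℝ) / ((y.2 : ℝ) ^ 2 * (Q:ℝ) ^ 2)
      ≤ 2 / Q := by
    rw [Finset.sum_product]
    have hinner : ∀ a' ∈ Finset.Icc 1 Q,
        ∑ q' ∈ Finset.Icc 1 Q, (1:ℝ) / ((q':ℝ)^2 * (Q:ℝ)^2) ≤ 2 / (Q:ℝ)^2 := by
      intro a' _
      have : ∑ q' ∈ Finset.Icc 1 Q, (1:ℝ) / ((q':ℝ)^2 * (Q:ℝ)^2)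
          = (∑ q' ∈ Finset.Icc 1 Q, (1:ℝ) / (q':ℝ)^2) / (Q:ℝ)^2 := by
        rw [Finset.sum_div]
        refine Finset.sum_congr rfl fun q' _ => ?_
        rw [div_div]
      rw [this]
      exact div_le_div_of_nonneg_right (sum_inv_sq_le Q) (by positivity) |>.trans_eq rfl
    calc ∑ a' ∈ Finset.Icc 1 Q, ∑ q' ∈ Finset.Icc 1 Q, (1:ℝ) / ((q':ℝ)^2 * (Q:ℝ)^2)
        ≤ ∑ a' ∈ Finset.Icc 1 Q, 2 / (Q:ℝ)^2 := Finset.sum_le_sum hinner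
      _ = Q * (2 / (Q:ℝ)^2) := by
          rw [Finset.sum_const, Nat.card_Icc]
          simp [nsmul_eq_mul]
      _ = 2 / Q := by field_simp
  linarith [step1, step2.le, step3, step4]
end

section
/- ∫_0^1 W(x) dx = ζ(2)/2 = π²/12, where W(x) = (1/x)·log(1/max(x, 1−x)) for x ∈ (0,1]. -/
open Real MeasureTheory Set intervalIntegral

lemma integral_eq_tsum_aux {s : Set ℝ} (hs : MeasurableSet s) {F : ℕ → ℝ → ℝ} {f : ℝ → ℝ}
    {c : ℕ → ℝ} {T : ℝ}
    (hFint : ∀ n, IntegrableOn (F n) s)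
    (hnn : ∀ n, ∀ x ∈ s, 0 ≤ F n x)
    (hval : ∀ n, ∫ x in s, F n x = c n)
    (hcT : HasSum c T)
    (heq : ∀ x ∈ s, HasSum (fun n => F n x) (f x)) :
    ∫ x in s, f x = T := by
  have hnorm : ∀ n, ∫ x in s, ‖F n x‖ = c n := by
    intro n
    rw [← hval n]
    exact setIntegral_congr_fun hs fun x hx => Real.norm_of_nonneg (hnn n x hx)
  have hsum : Summable fun n => ∫ x in s, ‖F n x‖ := by
    rw [funext hnorm]; exact hcT.summable
  have H := MeasureTheory.hasSum_integral_of_summable_integral_norm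
    (μ := volume.restrict s) hFint hsum
  have h2 : ∫ x in s, (∑' n, F n x) = ∫ x in s, f x :=
    setIntegral_congr_fun hs fun x hx => (heq x hx).tsum_eq
  rw [h2, funext hval] at H
  exact H.unique hcT

lemma hasSum_log_term {x : ℝ} (hx0 : 0 < x) (hx1 : x < 1) :
    HasSum (fun n : ℕ => x ^ n / ((n : ℝ) + 1)) (-Real.log (1 - x) / x) := by
  have h := Real.hasSum_pow_div_log_of_abs_lt_one (x := x) (by rw [abs_of_pos hx0]; exact hx1)
  have h2 : (fun n : ℕ => x ^ (n + 1) / ((n : ℝ) + 1) / x)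
      = fun n : ℕ => x ^ n / ((n : ℝ) + 1) := by
    funext n
    rw [pow_succ]
    field_simp
  have := h.div_const x
  rwa [h2] at this

lemma summable_S : Summable (fun n : ℕ => (1/2 : ℝ) ^ (n + 1) / ((n : ℝ) + 1) ^ 2) := by
  refine Summable.of_nonneg_of_le (fun n => by positivity) (fun n => ?_)
    (summable_geometric_of_lt_one (by norm_num) (by norm_num : (1/2:ℝ) < 1))
  calc (1/2 : ℝ) ^ (n + 1) / ((n : ℝ) + 1) ^ 2 ≤ (1/2 : ℝ) ^ (n + 1) / 1 := by
        apply div_le_div_of_nonneg_left (by positivity) (by norm_num)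
        nlinarith [Nat.cast_nonneg (α := ℝ) n]
    _ ≤ (1/2 : ℝ) ^ n := by
        rw [div_one, pow_succ]
        nlinarith [pow_pos (by norm_num : (0:ℝ) < 1/2) n]

lemma hasSum_zeta_shift : HasSum (fun n : ℕ => 1 / ((n : ℝ) + 1) ^ 2) (Real.pi ^ 2 / 6) := by
  have h := hasSum_zeta_two
  have h2 := (hasSum_nat_add_iff (f := fun n : ℕ => (1 : ℝ) / (n : ℝ) ^ 2) 1).mpr
    (by simpa using h)
  convert h2 using 2 with n
  · rfl
  push_cast
  ring

lemma hasSum_log_half : HasSum (fun n : ℕ => (1/2 : ℝ) ^ (n + 1) / ((n : ℝ) + 1)) (Real.log 2) := by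
  have h := Real.hasSum_pow_div_log_of_abs_lt_one (x := (1/2 : ℝ)) (by rw [abs_of_pos] <;> norm_num)
  have : -Real.log (1 - 1/2) = Real.log 2 := by
    rw [show (1 : ℝ) - 1/2 = 1/2 by norm_num, one_div, Real.log_inv, neg_neg]
  rwa [this] at h

noncomputable def Sval : ℝ := ∑' n : ℕ, (1/2 : ℝ) ^ (n + 1) / ((n : ℝ) + 1) ^ 2

lemma hasSum_Sval : HasSum (fun n : ℕ => (1/2 : ℝ) ^ (n + 1) / ((n : ℝ) + 1) ^ 2) Sval :=
  summable_S.hasSum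

-- per-term integral of x^n/(n+1) on [a,b]
lemma integral_pow_term (n : ℕ) (a b : ℝ) :
    ∫ x in a..b, x ^ n / ((n : ℝ) + 1) = (b ^ (n + 1) - a ^ (n + 1)) / ((n : ℝ) + 1) ^ 2 := by
  rw [intervalIntegral.integral_div, integral_pow]
  push_cast
  rw [div_div, sq]

lemma int_A : ∫ x in (0:ℝ)..(1/2), -Real.log (1 - x) / x = Sval := by
  rw [intervalIntegral.integral_of_le (by norm_num : (0:ℝ) ≤ 1/2)]
  refine integral_eq_tsum_aux measurableSet_Ioc
    (F := fun n x => x ^ n / ((n : ℝ) + 1)) (fun n => ?_) (fun n x hx => ?_) (fun n => ?_)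
    hasSum_Sval (fun x hx => hasSum_log_term hx.1 (lt_of_le_of_lt hx.2 (by norm_num)))
  · exact (Continuous.integrableOn_Ioc (by continuity))
  · have := hx.1
    positivity
  · rw [← intervalIntegral.integral_of_le (by norm_num : (0:ℝ) ≤ 1/2), integral_pow_term]
    norm_num

lemma int_C1 : ∫ x in (1/2:ℝ)..1, -Real.log (1 - x) / x = Real.pi ^ 2 / 6 - Sval := by
  rw [intervalIntegral.integral_of_le (by norm_num : (1/2:ℝ) ≤ 1), integral_Ioc_eq_integral_Ioo]
  refine integral_eq_tsum_aux measurableSet_Ioo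
    (F := fun n x => x ^ n / ((n : ℝ) + 1)) (fun n => ?_) (fun n x hx => ?_) (fun n => ?_)
    (hasSum_zeta_shift.sub hasSum_Sval) (fun x hx => hasSum_log_term (by linarith [hx.1]) hx.2)
  · exact (Continuous.integrableOn_Ioc (by continuity)).mono_set Ioo_subset_Ioc_self
  · have h1 : (0:ℝ) < x := by linarith [hx.1]
    positivity
  · rw [← integral_Ioc_eq_integral_Ioo,
      ← intervalIntegral.integral_of_le (by norm_num : (1/2:ℝ) ≤ 1), integral_pow_term]
    norm_num
    ring

section C3
variable (n : ℕ)

noncomputable def Gfun (n : ℕ) (x : ℝ) : ℝ :=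
  x ^ (n + 1) / ((n : ℝ) + 1) ^ 2 + x ^ (n + 1) * (-Real.log x) / ((n : ℝ) + 1)

lemma Gfun_cont : ContinuousOn (Gfun n) (Icc (0:ℝ) (1/2)) := by
  have h1 : Continuous fun x : ℝ => x ^ (n + 1) * (-Real.log x) := by
    have : (fun x : ℝ => x ^ (n + 1) * (-Real.log x)) = fun x => -(x ^ n * (x * Real.log x)) := by
      funext x; ring
    rw [this]
    exact ((continuous_pow n).mul Real.continuous_mul_log).neg
  exact (((continuous_pow (n + 1)).div_const _).add (h1.div_const _)).continuousOn

lemma Gfun_deriv {x : ℝ} (hx : x ∈ Ioo (0:ℝ) (1/2)) :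
    HasDerivAt (Gfun n) (x ^ n * (-Real.log x)) x := by
  have hx0 : x ≠ 0 := ne_of_gt hx.1
  have h1 := hasDerivAt_pow (n + 1) x
  have h2 := (Real.hasDerivAt_log hx0).neg
  have h := (h1.div_const (((n : ℝ) + 1) ^ 2)).add ((h1.mul h2).div_const ((n : ℝ) + 1))
  refine h.congr_deriv ?_
  have hn : ((n : ℝ) + 1) ≠ 0 := by positivity
  push_cast
  simp only [Pi.neg_apply]
  field_simp
  ring

lemma integrableOn_pow_neg_log :
    IntegrableOn (fun x : ℝ => x ^ n * (-Real.log x)) (Ioc (0:ℝ) (1/2)) := by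
  refine integrableOn_deriv_of_nonneg (Gfun_cont n) (fun x hx => Gfun_deriv n hx)
    (fun x hx => ?_)
  have h1 : Real.log x ≤ 0 := Real.log_nonpos hx.1.le (by linarith [hx.2])
  have h2 : (0:ℝ) ≤ x := hx.1.le
  exact mul_nonneg (pow_nonneg h2 n) (neg_nonneg.mpr h1)

lemma integral_pow_neg_log :
    ∫ x in (0:ℝ)..(1/2), x ^ n * (-Real.log x)
      = (1/2 : ℝ) ^ (n + 1) / ((n : ℝ) + 1) * Real.log 2
        + (1/2 : ℝ) ^ (n + 1) / ((n : ℝ) + 1) ^ 2 := by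
  rw [integral_eq_sub_of_hasDeriv_right_of_le (by norm_num) (Gfun_cont n)
    (fun x hx => (Gfun_deriv n hx).hasDerivWithinAt)
    ((intervalIntegrable_iff_integrableOn_Ioc_of_le (by norm_num)).mpr
      (integrableOn_pow_neg_log n))]
  have hl : -Real.log (1/2 : ℝ) = Real.log 2 := by rw [one_div, Real.log_inv, neg_neg]
  simp only [Gfun, zero_pow (Nat.succ_ne_zero n), hl]
  ring
end C3

lemma int_C3 : ∫ x in (0:ℝ)..(1/2), -Real.log x / (1 - x)
    = Real.log 2 * Real.log 2 + Sval := by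
  rw [intervalIntegral.integral_of_le (by norm_num : (0:ℝ) ≤ 1/2)]
  refine integral_eq_tsum_aux measurableSet_Ioc
    (F := fun n x => x ^ n * (-Real.log x)) (fun n => integrableOn_pow_neg_log n)
    (fun n x hx => ?_) (fun n => ?_)
    ((hasSum_log_half.mul_right (Real.log 2)).add hasSum_Sval) (fun x hx => ?_)
  · have h1 : Real.log x ≤ 0 := Real.log_nonpos hx.1.le (by linarith [hx.2])
    exact mul_nonneg (pow_nonneg hx.1.le n) (neg_nonneg.mpr h1)
  · rw [← intervalIntegral.integral_of_le (by norm_num : (0:ℝ) ≤ 1/2)]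
    exact integral_pow_neg_log n
  · have hg := (hasSum_geometric_of_lt_one hx.1.le
      (by linarith [hx.2] : x < 1)).mul_right (-Real.log x)
    rwa [inv_mul_eq_div] at hg

lemma int_C2 : ∫ x in (1/2:ℝ)..1, -Real.log (1 - x) / x
    = ∫ x in (0:ℝ)..(1/2), -Real.log x / (1 - x) := by
  have h := intervalIntegral.integral_comp_sub_left (a := (1/2:ℝ)) (b := 1)
    (fun y => -Real.log y / (1 - y)) 1
  simp only [sub_sub_cancel] at h
  norm_num at h
  convert h using 2

lemma int_B : ∫ x in (1/2:ℝ)..1, -Real.log x / x = Real.log 2 ^ 2 / 2 := by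
  have hderiv : ∀ x ∈ uIcc (1/2:ℝ) 1,
      HasDerivAt (fun x : ℝ => -(Real.log x ^ 2 / 2)) (-Real.log x / x) x := by
    intro x hx
    rw [uIcc_of_le (by norm_num)] at hx
    have hx0 : x ≠ 0 := by have := hx.1; intro h; rw [h] at this; linarith
    have h := (((Real.hasDerivAt_log hx0).pow 2).div_const 2).neg
    refine h.congr_deriv ?_
    have : (0:ℝ) < x := by have := hx.1; linarith
    field_simp
    ring
  have hcont : ContinuousOn (fun x : ℝ => -Real.log x / x) (uIcc (1/2:ℝ) 1) := by
    apply ContinuousOn.div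
    · exact (Real.continuousOn_log.mono (fun x hx => by
        rw [uIcc_of_le (by norm_num)] at hx
        simp only [mem_compl_iff, mem_singleton_iff]
        have := hx.1; intro h; rw [h] at this; linarith)).neg
    · exact continuousOn_id
    · intro x hx
      rw [uIcc_of_le (by norm_num)] at hx
      have := hx.1; intro h; rw [h] at this; linarith
  rw [integral_eq_sub_of_hasDerivAt hderiv hcont.intervalIntegrable]
  rw [Real.log_one, one_div, Real.log_inv]
  ring

lemma intable1 : IntegrableOn (fun x : ℝ => -Real.log (1 - x) / x) (Ioc (0:ℝ) (1/2)) := by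
  refine Integrable.mono' (integrable_const 2)
    (((Real.measurable_log.comp (measurable_const.sub measurable_id)).neg.div
      measurable_id).aestronglyMeasurable) ?_
  rw [ae_restrict_iff' measurableSet_Ioc]
  refine ae_of_all _ fun x hx => ?_
  have hx0 : 0 < x := hx.1
  have hx2 : x ≤ 1/2 := hx.2
  have h1x : (0:ℝ) < 1 - x := by linarith
  have hlognp : Real.log (1 - x) ≤ 0 := Real.log_nonpos (by linarith) (by linarith)
  have hfnn : 0 ≤ -Real.log (1 - x) / x := div_nonneg (by linarith) hx0.le
  rw [Real.norm_of_nonneg hfnn, div_le_iff₀ hx0]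
  have hle := Real.log_le_sub_one_of_pos (show (0:ℝ) < (1 - x)⁻¹ by positivity)
  rw [Real.log_inv] at hle
  have h2 : (1 - x)⁻¹ ≤ 2 * x + 1 := by
    rw [show (1 - x)⁻¹ = 1 / (1 - x) by rw [one_div], div_le_iff₀ h1x]
    nlinarith
  linarith

/-- `∫_0^1 W(x) dx = ζ(2)/2 = π²/12`, where `W(x) = (1/x) log(1/max(x, 1−x))`. -/
theorem integral_W_eq :
    ∫ x in (0:ℝ)..1, -Real.log (max x (1 - x)) / x = Real.pi ^ 2 / 12 := by
  have h1 : IntervalIntegrable (fun x : ℝ => -Real.log (max x (1 - x)) / x) volume 0 (1/2) := by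
    rw [intervalIntegrable_iff_integrableOn_Ioc_of_le (by norm_num)]
    exact intable1.congr_fun
      (fun x hx => by rw [max_eq_right (by linarith [hx.1, hx.2] : x ≤ 1 - x)])
      measurableSet_Ioc
  have h2 : IntervalIntegrable (fun x : ℝ => -Real.log (max x (1 - x)) / x) volume (1/2) 1 := by
    rw [intervalIntegrable_iff_integrableOn_Ioc_of_le (by norm_num)]
    have hcont : ContinuousOn (fun x : ℝ => -Real.log x / x) (Icc (1/2:ℝ) 1) := by
      apply ContinuousOn.div
      · exact (Real.continuousOn_log.mono (fun x hx => by
          simp only [mem_compl_iff, mem_singleton_iff]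
          have := hx.1; intro h; rw [h] at this; linarith)).neg
      · exact continuousOn_id
      · intro x hx
        have := hx.1; intro h; rw [h] at this; linarith
    exact ((hcont.integrableOn_Icc).mono_set Ioc_subset_Icc_self).congr_fun
      (fun x hx => by rw [max_eq_left (by linarith [hx.1.le] : 1 - x ≤ x)])
      measurableSet_Ioc
  rw [← intervalIntegral.integral_add_adjacent_intervals h1 h2]
  have e1 : ∫ x in (0:ℝ)..(1/2), -Real.log (max x (1 - x)) / x
      = ∫ x in (0:ℝ)..(1/2), -Real.log (1 - x) / x := by
    apply intervalIntegral.integral_congr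
    intro x hx
    rw [uIcc_of_le (by norm_num)] at hx
    simp only [max_eq_right (by linarith [hx.1, hx.2] : x ≤ 1 - x)]
  have e2 : ∫ x in (1/2:ℝ)..1, -Real.log (max x (1 - x)) / x
      = ∫ x in (1/2:ℝ)..1, -Real.log x / x := by
    apply intervalIntegral.integral_congr
    intro x hx
    rw [uIcc_of_le (by norm_num)] at hx
    simp only [max_eq_left (by linarith [hx.1] : 1 - x ≤ x)]
  rw [e1, e2, int_A, int_B]
  have hkey : Real.pi ^ 2 / 6 - Sval = Real.log 2 * Real.log 2 + Sval :=
    int_C1.symm.trans (int_C2.trans int_C3)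
  rw [pow_two]
  linarith
end

section
/- ∫_1^∞ (2/t + 2(1 − 1/t)² log(1 − 1/t)) · log t dt = 2(2ζ(3) − 1). -/
open MeasureTheory Real Set Filter Topology

noncomputable def cc (n : ℕ) : ℝ := -2/((n:ℝ)+2) + 4/((n:ℝ)+1) - 2/(n:ℝ)

/-- the base integral -/
lemma base_int (n : ℕ) :
    IntegrableOn (fun t : ℝ => (1/t)^(n+2) * Real.log t) (Set.Ioi 1) volume ∧
    ∫ t in Set.Ioi (1:ℝ), (1/t)^(n+2) * Real.log t = 1/((n:ℝ)+1)^2 := by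
  set G : ℝ → ℝ := fun t => (-(Real.log t) * ((n:ℝ)+1) - 1) / (((n:ℝ)+1)^2 * t^(n+1)) with hG
  have hn1 : (0:ℝ) < (n:ℝ)+1 := by positivity
  have hderiv : ∀ t ∈ Set.Ici (1:ℝ), HasDerivAt G ((1/t)^(n+2) * Real.log t) t := by
    intro t ht
    have ht0 : (0:ℝ) < t := lt_of_lt_of_le one_pos ht
    have hu : HasDerivAt (fun t : ℝ => -(Real.log t) * ((n:ℝ)+1) - 1)
        (-(1/t) * ((n:ℝ)+1)) t := by
      have := (((Real.hasDerivAt_log ht0.ne').neg).mul_const ((n:ℝ)+1)).sub_const 1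
      simpa [one_div] using this
    have hv : HasDerivAt (fun t : ℝ => ((n:ℝ)+1)^2 * t^(n+1))
        (((n:ℝ)+1)^2 * (((n:ℝ)+1) * t^n)) t := by
      have := (hasDerivAt_pow (n+1) t).const_mul (((n:ℝ)+1)^2)
      simpa [Nat.cast_add, mul_comm] using this
    have hv0 : ((n:ℝ)+1)^2 * t^(n+1) ≠ 0 := by positivity
    have := hu.div hv hv0
    refine this.congr_deriv ?_
    rw [div_pow, one_pow]
    field_simp
    ring
  have htend : Tendsto G atTop (𝓝 0) := by
    have h1 : Tendsto (fun t : ℝ => Real.log t / t) atTop (𝓝 0) :=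
      Real.isLittleO_log_id_atTop.tendsto_div_nhds_zero
    have h2 : Tendsto (fun t : ℝ => 1 / t) atTop (𝓝 0) := by
      simpa [one_div] using (tendsto_inv_atTop_zero : Tendsto (fun r : ℝ => r⁻¹) atTop (𝓝 0))
    have hA := (((h1.const_mul (-(((n:ℝ)+1)))).sub h2).mul_const (1/((n:ℝ)+1)^2)).mul (h2.pow n)
    have hA' : Tendsto (fun t : ℝ =>
        (-(((n:ℝ)+1)) * (Real.log t / t) - 1 / t) * (1/((n:ℝ)+1)^2) * (1/t)^n) atTop (𝓝 0) := by
      convert hA using 2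
      simp
    refine hA'.congr' ?_
    filter_upwards [eventually_gt_atTop (0:ℝ)] with t ht
    have htne : t ≠ 0 := ht.ne'
    simp only [hG]
    rw [div_pow, one_pow]
    field_simp
    ring
  have hpos : ∀ t ∈ Set.Ioi (1:ℝ), 0 ≤ (1/t)^(n+2) * Real.log t := by
    intro t ht
    have ht1 : (1:ℝ) ≤ t := le_of_lt ht
    have := Real.log_nonneg ht1
    positivity
  have hint : IntegrableOn (fun t : ℝ => (1/t)^(n+2) * Real.log t) (Set.Ioi 1) volume :=
    integrableOn_Ioi_deriv_of_nonneg' hderiv hpos htend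
  refine ⟨hint, ?_⟩
  have := integral_Ioi_of_hasDerivAt_of_nonneg' hderiv hpos htend
  rw [this]
  simp [hG, neg_div, one_div]

lemma hasSum_cc {u : ℝ} (h0 : 0 < u) (h1 : u < 1) :
    HasSum (fun n : ℕ => cc n * u^(n+2)) (2*u + 2*(1-u)^2 * Real.log (1-u)) := by
  have habs : |u| < 1 := by rw [abs_of_pos h0]; exact h1
  have h := Real.hasSum_pow_div_log_of_abs_lt_one habs
  set L : ℝ := -Real.log (1-u) with hL
  -- h : HasSum (fun n => u^(n+1)/(n+1)) L
  set gA : ℕ → ℝ := fun n => -2*(u^(n+1)/((n:ℝ)+1)) with hgA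
  have hA : HasSum (fun n => gA (n+1)) (-2*L + 2*u) := by
    refine (hasSum_nat_add_iff 1).2 ?_
    have := h.mul_left (-2)
    convert this using 1
    · rfl
    simp [hgA]
  have hB := h.mul_left (4*u)
  set gC : ℕ → ℝ := fun n => -2*u^(n+2)/(n:ℝ) with hgC
  have hC : HasSum gC (-2*u^2*L) := by
    have h0' : HasSum (fun n => gC (n+1)) (-2*u^2*L) := by
      have := h.mul_left (-2*u^2)
      convert this using 2 with n
      · rfl
      simp only [hgC]
      push_cast
      ring
    have := (hasSum_nat_add_iff 1).1 h0'
    simpa [hgC] using this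
  have htot := (hA.add hB).add hC
  convert htot using 1
  · funext n
    simp only [hgA, hgC, cc]
    rcases n with _ | k
    · norm_num
      ring
    · have e1 : ((k:ℝ)+1+2) ≠ 0 := by positivity
      have e2 : ((k:ℝ)+1+1) ≠ 0 := by positivity
      have e3 : ((k:ℝ)+1) ≠ 0 := by positivity
      push_cast
      field_simp
      ring
  · have : Real.log (1-u) = -L := by rw [hL]; ring
    rw [this]
    ring

lemma hasSum_coeff (Z : ℝ) (hZ : HasSum (fun n : ℕ => 1/((n:ℝ)+1)^3) Z) :
    HasSum (fun n : ℕ => cc n * (1/((n:ℝ)+1)^2)) (4*Z - 2) := by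
  have h3 : HasSum (fun k : ℕ => 1/(((k:ℝ)+2))^3) (Z - 1) := by
    have h' : HasSum (fun k : ℕ => (fun n : ℕ => 1/((n:ℝ)+1)^3) (k+1)) (Z - 1) := by
      refine (hasSum_nat_add_iff (f := fun n : ℕ => 1/((n:ℝ)+1)^3) 1).2 ?_
      convert hZ using 1
      · rfl
      norm_num
    convert h' using 2 with k
    push_cast
    ring
  have hsum2 : Summable (fun n : ℕ => 1/((n:ℝ)+1)^2) := by
    have h2' : Summable (fun n : ℕ => (fun m : ℕ => 1/((m:ℝ))^2) (n+1)) :=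
      (summable_nat_add_iff (f := fun m : ℕ => 1/((m:ℝ))^2) 1).2
        (Real.summable_one_div_nat_pow.2 one_lt_two)
    convert h2' using 2 with n
    push_cast
    ring
  have htel : HasSum (fun k : ℕ => 1/(((k:ℝ)+1)*((k:ℝ)+2)*((k:ℝ)+3))) (1/4) := by
    set a : ℕ → ℝ := fun i => 1/(2*((i:ℝ)+1)*((i:ℝ)+2)) with ha
    have hterm : ∀ i : ℕ, 1/(((i:ℝ)+1)*((i:ℝ)+2)*((i:ℝ)+3)) = a i - a (i+1) := by
      intro i
      simp only [ha]
      have e1 : ((i:ℝ)+1) ≠ 0 := by positivity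
      have e2 : ((i:ℝ)+2) ≠ 0 := by positivity
      have e3 : ((i:ℝ)+3) ≠ 0 := by positivity
      push_cast
      field_simp
      ring
    have hsummable : Summable (fun k : ℕ => 1/(((k:ℝ)+1)*((k:ℝ)+2)*((k:ℝ)+3))) := by
      refine Summable.of_nonneg_of_le (fun k => by positivity) (fun k => ?_) hsum2
      rw [div_le_div_iff₀ (by positivity) (by positivity)]
      nlinarith [sq_nonneg ((k:ℝ)+1), Nat.cast_nonneg (α := ℝ) k]
    rw [Summable.hasSum_iff_tendsto_nat hsummable]
    have hps : (fun m : ℕ => ∑ i ∈ Finset.range m, 1/(((i:ℝ)+1)*((i:ℝ)+2)*((i:ℝ)+3)))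
        = fun m => a 0 - a m := by
      funext m
      rw [Finset.sum_congr rfl (fun i _ => hterm i), Finset.sum_range_sub' a m]
    rw [hps]
    have hz : Tendsto a atTop (𝓝 0) := by
      refine squeeze_zero (fun m => by simp only [ha]; positivity) (fun m => ?_)
        tendsto_one_div_add_atTop_nhds_zero_nat
      simp only [ha]
      rw [div_le_div_iff₀ (by positivity) (by positivity)]
      nlinarith [Nat.cast_nonneg (α := ℝ) m]
    have ha0 : a 0 = 1/4 := by norm_num [ha]
    simpa [ha0] using (tendsto_const_nhds (x := a 0)).sub hz
  have hsub := (htel.sub h3).mul_left (-4)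
  have hshift : HasSum (fun k : ℕ => cc (k+1) * (1/(((k+1:ℕ):ℝ)+1)^2)) (4*Z - 5) := by
    convert hsub using 1
    · rfl
    · funext k
      simp only [cc]
      have e1 : ((k:ℝ)+1) ≠ 0 := by positivity
      have e2 : ((k:ℝ)+2) ≠ 0 := by positivity
      have e3 : ((k:ℝ)+3) ≠ 0 := by positivity
      push_cast
      field_simp
      ring
    · ring
  have hfin := (hasSum_nat_add_iff (f := fun n : ℕ => cc n * (1/((n:ℝ)+1)^2)) 1).1 hshift
  convert hfin using 1
  · rfl
  simp only [Finset.range_one, Finset.sum_singleton]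
  norm_num [cc]
  ring

/-- `∫_1^∞ (2/t + 2(1 − 1/t)² log(1 − 1/t)) log t dt = 2(2ζ(3) − 1)`. -/
theorem integral_log_weight :
    ∫ t in Set.Ioi (1:ℝ),
        (2 / t + 2 * (1 - 1 / t) ^ 2 * Real.log (1 - 1 / t)) * Real.log t
      = 2 * (2 * (∑' n : ℕ, (1 : ℝ) / ((n : ℝ) + 1) ^ 3) - 1) := by
  have hZsum : Summable (fun n : ℕ => 1/((n:ℝ)+1)^3) := by
    have h2' : Summable (fun n : ℕ => (fun m : ℕ => 1/((m:ℝ))^3) (n+1)) :=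
      (summable_nat_add_iff (f := fun m : ℕ => 1/((m:ℝ))^3) 1).2
        (Real.summable_one_div_nat_pow.2 (by norm_num))
    convert h2' using 2 with n
    push_cast
    ring
  set Z : ℝ := ∑' n : ℕ, (1 : ℝ) / ((n : ℝ) + 1) ^ 3 with hZdef
  have hZ : HasSum (fun n : ℕ => 1/((n:ℝ)+1)^3) Z := hZsum.hasSum
  set F : ℕ → ℝ → ℝ := fun n t => cc n * ((1/t)^(n+2) * Real.log t) with hF
  have hFint : ∀ n, Integrable (F n) (volume.restrict (Set.Ioi 1)) := by
    intro n
    exact ((base_int n).1).const_mul (cc n)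
  have hnorm : ∀ n, ∫ t in Set.Ioi (1:ℝ), ‖F n t‖ = |cc n| * (1/((n:ℝ)+1)^2) := by
    intro n
    have hcongr : ∀ t ∈ Set.Ioi (1:ℝ), ‖F n t‖ = |cc n| * ((1/t)^(n+2) * Real.log t) := by
      intro t ht
      have ht1 : (1:ℝ) ≤ t := le_of_lt ht
      have hlog := Real.log_nonneg ht1
      have hnn : 0 ≤ (1/t)^(n+2) * Real.log t := by positivity
      simp only [hF]
      rw [Real.norm_eq_abs, abs_mul, abs_of_nonneg hnn]
    rw [setIntegral_congr_fun measurableSet_Ioi hcongr, integral_const_mul, (base_int n).2]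
  have hb : ∀ n : ℕ, |cc n| ≤ 8 := by
    intro n
    have hn0 : (0:ℝ) ≤ (n:ℝ) := Nat.cast_nonneg n
    have e1 : |(-2:ℝ)/((n:ℝ)+2)| ≤ 2 := by
      have : |(-2:ℝ)/((n:ℝ)+2)| = 2/((n:ℝ)+2) := by
        rw [abs_div, abs_of_nonneg (by positivity : (0:ℝ) ≤ (n:ℝ)+2)]
        norm_num
      rw [this]
      exact div_le_self (by norm_num) (by linarith)
    have e2 : |(4:ℝ)/((n:ℝ)+1)| ≤ 4 := by
      have : |(4:ℝ)/((n:ℝ)+1)| = 4/((n:ℝ)+1) := by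
        rw [abs_div, abs_of_nonneg (by positivity : (0:ℝ) ≤ (n:ℝ)+1)]
        norm_num
      rw [this]
      exact div_le_self (by norm_num) (by linarith)
    have e3 : |(2:ℝ)/(n:ℝ)| ≤ 2 := by
      rcases Nat.eq_zero_or_pos n with h | h
      · simp [h]
      · have h1 : (1:ℝ) ≤ (n:ℝ) := by exact_mod_cast h
        rw [abs_of_nonneg (by positivity : (0:ℝ) ≤ 2/(n:ℝ))]
        exact div_le_self (by norm_num) h1
    have hccn : cc n = (-2/((n:ℝ)+2) + 4/((n:ℝ)+1)) + (-(2/(n:ℝ))) := by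
      simp only [cc]
      ring
    calc |cc n| = |(-2/((n:ℝ)+2) + 4/((n:ℝ)+1)) + (-(2/(n:ℝ)))| := by rw [hccn]
      _ ≤ |(-2/((n:ℝ)+2) + 4/((n:ℝ)+1))| + |(-(2/(n:ℝ)))| := abs_add_le _ _
      _ ≤ (|(-2:ℝ)/((n:ℝ)+2)| + |(4:ℝ)/((n:ℝ)+1)|) + |(2:ℝ)/(n:ℝ)| := by
          rw [abs_neg]
          exact add_le_add_left (abs_add_le _ _) _
      _ ≤ (2 + 4) + 2 := add_le_add (add_le_add e1 e2) e3
      _ = 8 := by norm_num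
  have hsum2 : Summable (fun n : ℕ => 1/((n:ℝ)+1)^2) := by
    have h2' : Summable (fun n : ℕ => (fun m : ℕ => 1/((m:ℝ))^2) (n+1)) :=
      (summable_nat_add_iff (f := fun m : ℕ => 1/((m:ℝ))^2) 1).2
        (Real.summable_one_div_nat_pow.2 one_lt_two)
    convert h2' using 2 with n
    push_cast
    ring
  have hsumnorm : Summable (fun n : ℕ => ∫ t in Set.Ioi (1:ℝ), ‖F n t‖) := by
    rw [funext hnorm]
    refine Summable.of_nonneg_of_le (fun n => by positivity) (fun n => ?_) (hsum2.mul_left 8)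
    exact mul_le_mul_of_nonneg_right (hb n) (by positivity)
  have hkey := integral_tsum_of_summable_integral_norm hFint hsumnorm
  have heq : ∀ t ∈ Set.Ioi (1:ℝ),
      (fun t => ∑' n : ℕ, F n t) t
        = (2 / t + 2 * (1 - 1 / t) ^ 2 * Real.log (1 - 1 / t)) * Real.log t := by
    intro t ht
    have ht1 : (1:ℝ) < t := ht
    have ht0 : (0:ℝ) < t := lt_trans one_pos ht1
    have hu0 : 0 < 1/t := by positivity
    have hu1 : 1/t < 1 := by rw [div_lt_one ht0]; exact ht1
    have hs := (hasSum_cc hu0 hu1).mul_right (Real.log t)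
    have : (fun n : ℕ => cc n * (1/t)^(n+2) * Real.log t) = fun n => F n t := by
      funext n
      simp only [hF]
      ring
    rw [this] at hs
    show (∑' n : ℕ, F n t) = _
    rw [hs.tsum_eq]
    ring
  rw [setIntegral_congr_fun measurableSet_Ioi heq] at hkey
  rw [← hkey]
  have hval : ∀ n : ℕ, ∫ t in Set.Ioi (1:ℝ), F n t = cc n * (1/((n:ℝ)+1)^2) := by
    intro n
    simp only [hF]
    rw [integral_const_mul, (base_int n).2]
  rw [funext hval, (hasSum_coeff Z hZ).tsum_eq]
  ring
end
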